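/- Let ρ be the Witt-algebra representation on ℂ((z)) given by ρ(L_i) = −(h^{i+1}/h′)∂ + (b + ic)h^i for all i ∈ ℤ, where h,b ∈ ℂ((z)), h′ ≠ 0, c ∈ ℂ. Then [ρ(L_2), ρ(L_{−2})] − 4ρ(L_0) = 0; consequently, extending ρ to the Virasoro algebra (central extension with cocycle Ψ(L_i,L_j) = (1/12)(i³−i)δ_{i+j,0}) forces the central element K to be mapped to 0. -/

import Mathlib

set_option synthInstance.maxHeartbeats 1000000
set_option maxHeartbeats 1000000

noncomputable section

/-- The derivative `∂ = d/dz` on `ℂ((z))`, as a `ℂ`-linear endomorphism. -/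
def Dz : Module.End ℂ (LaurentSeries ℂ) := LaurentSeries.derivative ℂ

/-- Multiplication by a Laurent series `g`, as a `ℂ`-linear endomorphism of `ℂ((z))`. -/
def mz (g : LaurentSeries ℂ) : Module.End ℂ (LaurentSeries ℂ) where
  toFun f := g * f
  map_add' := mul_add g
  map_smul' c f := by
    show g * (c • f) = c • (g * f)
    rw [← HahnSeries.single_zero_mul_eq_smul, ← HahnSeries.single_zero_mul_eq_smul, mul_left_comm]

/-- `P` is a differential operator on `ℂ((z))` of order `≤ k`: `P = Σ_{j=0}^{k} ξ_j ∂^j`. -/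
def DiffOrderLE (P : Module.End ℂ (LaurentSeries ℂ)) (k : ℕ) : Prop :=
  ∃ ξ : ℕ → LaurentSeries ℂ, P = ∑ j ∈ Finset.range (k + 1), mz (ξ j) * Dz ^ j

/-- `P` is a differential operator on `ℂ((z))` of order `< k` (for `k = 0` this means `P = 0`). -/
def DiffOrderLT (P : Module.End ℂ (LaurentSeries ℂ)) (k : ℕ) : Prop :=
  ∃ ξ : ℕ → LaurentSeries ℂ, P = ∑ j ∈ Finset.range k, mz (ξ j) * Dz ^ j

/-- `P` is a differential operator on `ℂ((z))` of order exactly `k`. -/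
def HasOrder (P : Module.End ℂ (LaurentSeries ℂ)) (k : ℕ) : Prop :=
  DiffOrderLE P k ∧ ¬ DiffOrderLT P k



lemma Dz_coeff (f : LaurentSeries ℂ) (n : ℤ) :
    (Dz f).coeff n = ((n : ℂ) + 1) * f.coeff (n + 1) := by
  show (LaurentSeries.derivative ℂ f).coeff n = _
  rw [LaurentSeries.derivative_apply, LaurentSeries.hasseDeriv_coeff]
  push_cast
  rw [Ring.choose_one_right, zsmul_eq_mul]
  push_cast
  ring

lemma Dz_mul (f g : LaurentSeries ℂ) : Dz (f * g) = Dz f * g + f * Dz g := by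
  ext n
  have hsf : ((· - 1) '' f.support).IsPWO :=
    f.isPWO_support.image_of_monotone (fun a b hab => by simpa using hab)
  have hsg : ((· - 1) '' g.support).IsPWO :=
    g.isPWO_support.image_of_monotone (fun a b hab => by simpa using hab)
  have hfs : (Dz f).support ⊆ (· - 1) '' f.support := by
    intro x hx
    refine ⟨x + 1, ?_, by ring⟩
    intro h0
    apply hx
    simp [Dz_coeff, h0]
  have hgs : (Dz g).support ⊆ (· - 1) '' g.support := by
    intro x hx
    refine ⟨x + 1, ?_, by ring⟩
    intro h0
    apply hx
    simp [Dz_coeff, h0]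
  rw [HahnSeries.coeff_add, Dz_coeff, HahnSeries.coeff_mul,
      HahnSeries.coeff_mul_left' hsf hfs, HahnSeries.coeff_mul_right' hsg hgs]
  have e1 : ∑ ij ∈ Finset.antidiagonal hsf g.isPWO_support n,
      (Dz f).coeff ij.1 * g.coeff ij.2
      = ∑ ij ∈ Finset.antidiagonal f.isPWO_support g.isPWO_support (n+1),
      ((ij.1 : ℂ) * f.coeff ij.1) * g.coeff ij.2 := by
    refine Finset.sum_nbij' (fun p => (p.1 + 1, p.2)) (fun p => (p.1 - 1, p.2)) ?_ ?_ ?_ ?_ ?_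
    · rintro ⟨x, y⟩ hp
      rw [Finset.mem_antidiagonal] at hp ⊢
      obtain ⟨⟨x', hx', hxx⟩, hy, hxy⟩ := hp
      have hxx' : x' - 1 = x := hxx
      dsimp only at hxy ⊢
      refine ⟨by rw [show x + 1 = x' by omega]; exact hx', hy, by omega⟩
    · rintro ⟨x, y⟩ hp
      rw [Finset.mem_antidiagonal] at hp ⊢
      obtain ⟨hx, hy, hxy⟩ := hp
      dsimp only at hxy ⊢
      exact ⟨⟨x, hx, rfl⟩, hy, by omega⟩
    · rintro ⟨x, y⟩ _; simp
    · rintro ⟨x, y⟩ _; simp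
    · rintro ⟨x, y⟩ _
      rw [Dz_coeff]
      push_cast
      ring
  have e2 : ∑ ij ∈ Finset.antidiagonal f.isPWO_support hsg n,
      f.coeff ij.1 * (Dz g).coeff ij.2
      = ∑ ij ∈ Finset.antidiagonal f.isPWO_support g.isPWO_support (n+1),
      f.coeff ij.1 * ((ij.2 : ℂ) * g.coeff ij.2) := by
    refine Finset.sum_nbij' (fun p => (p.1, p.2 + 1)) (fun p => (p.1, p.2 - 1)) ?_ ?_ ?_ ?_ ?_
    · rintro ⟨x, y⟩ hp
      rw [Finset.mem_antidiagonal] at hp ⊢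
      obtain ⟨hx, ⟨y', hy', hyy⟩, hxy⟩ := hp
      have hyy' : y' - 1 = y := hyy
      dsimp only at hxy ⊢
      refine ⟨hx, by rw [show y + 1 = y' by omega]; exact hy', by omega⟩
    · rintro ⟨x, y⟩ hp
      rw [Finset.mem_antidiagonal] at hp ⊢
      obtain ⟨hx, hy, hxy⟩ := hp
      dsimp only at hxy ⊢
      exact ⟨hx, ⟨y, hy, rfl⟩, by omega⟩
    · rintro ⟨x, y⟩ _; simp
    · rintro ⟨x, y⟩ _; simp
    · rintro ⟨x, y⟩ _
      rw [Dz_coeff]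
      push_cast
      ring
  rw [e1, e2, ← Finset.sum_add_distrib, Finset.mul_sum]
  refine Finset.sum_congr rfl ?_
  rintro ⟨x, y⟩ hp
  rw [Finset.mem_antidiagonal] at hp
  obtain ⟨-, -, hxy⟩ := hp
  dsimp only at hxy ⊢
  have hc : (x : ℂ) + y = (n : ℂ) + 1 := by exact_mod_cast congrArg (fun t : ℤ => (t : ℂ)) hxy
  rw [show ((n:ℂ) + 1) = (x : ℂ) + y from hc.symm]
  ring

lemma Dz_one : Dz (1 : LaurentSeries ℂ) = 0 := by
  have := Dz_mul (1 : LaurentSeries ℂ) 1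
  rw [mul_one, one_mul] at this
  linear_combination -this

lemma Dz_C (k : ℂ) : Dz (algebraMap ℂ (LaurentSeries ℂ) k) = 0 := by
  have hC : algebraMap ℂ (LaurentSeries ℂ) k = HahnSeries.single (0:ℤ) k := by
    have h1 : algebraMap ℂ (LaurentSeries ℂ) k
        = HahnSeries.ofPowerSeries ℤ ℂ (PowerSeries.C k) := rfl
    rw [h1, HahnSeries.ofPowerSeries_C, HahnSeries.C_apply]
  rw [hC]
  ext n
  rw [Dz_coeff]
  rcases eq_or_ne n (-1) with rfl | hn
  · norm_num
  · rw [HahnSeries.coeff_single_of_ne (by omega)]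
    simp

lemma Dz_inv (x : LaurentSeries ℂ) (hx : x ≠ 0) :
    Dz x⁻¹ = -(Dz x) * (x⁻¹ * x⁻¹) := by
  have h1 : x * x⁻¹ = 1 := mul_inv_cancel₀ hx
  have h2 := congrArg (fun t => Dz t) h1
  simp only [Dz_mul, Dz_one] at h2
  have h3 : x⁻¹ * (Dz x * x⁻¹ + x * Dz x⁻¹) = 0 := by rw [h2, mul_zero]
  field_simp at h3
  rw [mul_comm] at h3 ⊢
  field_simp
  linear_combination h3

lemma mz_apply (g f : LaurentSeries ℂ) : mz g f = g * f := rfl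

lemma algC (k : ℂ) : algebraMap ℂ (LaurentSeries ℂ) k = HahnSeries.single (0:ℤ) k := by
  have h1 : algebraMap ℂ (LaurentSeries ℂ) k
      = HahnSeries.ofPowerSeries ℤ ℂ (PowerSeries.C k) := rfl
  rw [h1, HahnSeries.ofPowerSeries_C, HahnSeries.C_apply]

lemma smul_eq_Cmul (k : ℂ) (x : LaurentSeries ℂ) :
    k • x = algebraMap ℂ (LaurentSeries ℂ) k * x := by
  rw [algC, HahnSeries.single_zero_mul_eq_smul]

/-- Let `ρ` be the Witt-algebra representation on `ℂ((z))` given by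
`ρ(L i) = −(h^{i+1}/h′)∂ + (b + i c) h^i` for all `i ∈ ℤ`.  Then
`[ρ(L 2), ρ(L −2)] − 4 ρ(L 0) = 0`; consequently, extending `ρ` to the Virasoro algebra
(where `[L 2, L −2] = 4 L 0 + (1/2) K`) forces the central element `K` to be mapped to `0`. -/
theorem virasoro_central_element_acts_by_zero
    (h b : LaurentSeries ℂ) (c : ℂ) (hder : Dz h ≠ 0)
    (ρ : ℤ → Module.End ℂ (LaurentSeries ℂ))
    (hρ : ∀ i : ℤ, ρ i = mz (-(h ^ (i + 1) / Dz h)) * Dz +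
      mz ((b + algebraMap ℂ (LaurentSeries ℂ) ((i : ℂ) * c)) * h ^ i)) :
    ⁅ρ 2, ρ (-2)⁆ - (4 : ℂ) • ρ 0 = 0 ∧
    ∀ k : ℂ, ⁅ρ 2, ρ (-2)⁆ = (4 : ℂ) • ρ 0 + ((1 / 2 : ℂ) * k) • 1 → k = 0 := by
  have hh : h ≠ 0 := by
    intro h0
    exact hder (by rw [h0]; exact map_zero Dz)
  have dhi : Dz h⁻¹ = -(Dz h) * (h⁻¹ * h⁻¹) := Dz_inv h hh
  have dei : Dz (Dz h)⁻¹ = -(Dz (Dz h)) * ((Dz h)⁻¹ * (Dz h)⁻¹) := Dz_inv (Dz h) hder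
  have d2 : Dz (2 : LaurentSeries ℂ) = 0 := by
    have h2 : (2 : LaurentSeries ℂ) = algebraMap ℂ (LaurentSeries ℂ) 2 := (map_ofNat _ 2).symm
    rw [h2]; exact Dz_C 2
  have p3 : h ^ ((2:ℤ) + 1) = h * (h * h) := by
    rw [show ((2:ℤ) + 1) = ((3:ℕ):ℤ) by norm_num, zpow_natCast]; ring
  have p1 : h ^ ((-2:ℤ) + 1) = h⁻¹ := by
    rw [show ((-2:ℤ) + 1) = (-1 : ℤ) by norm_num, zpow_neg_one]
  have p0 : h ^ ((0:ℤ) + 1) = h := by norm_num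
  have q2 : h ^ (2:ℤ) = h * h := by
    rw [show (2:ℤ) = ((2:ℕ):ℤ) from rfl, zpow_natCast]; ring
  have qm2 : h ^ (-2:ℤ) = h⁻¹ * h⁻¹ := by
    rw [show (-2:ℤ) = -((2:ℕ):ℤ) from rfl, zpow_neg, zpow_natCast, pow_two, mul_inv_rev]
  have q0 : h ^ (0:ℤ) = 1 := zpow_zero h
  have c2 : algebraMap ℂ (LaurentSeries ℂ) (((2:ℤ):ℂ) * c)
      = 2 * algebraMap ℂ (LaurentSeries ℂ) c := by
    rw [show ((2:ℤ):ℂ) * c = 2 * c by norm_num, map_mul, map_ofNat]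
  have cm2 : algebraMap ℂ (LaurentSeries ℂ) ((((-2):ℤ):ℂ) * c)
      = -(2 * algebraMap ℂ (LaurentSeries ℂ) c) := by
    rw [show (((-2):ℤ):ℂ) * c = -(2 * c) by norm_num, map_neg, map_mul, map_ofNat]
  have c0 : algebraMap ℂ (LaurentSeries ℂ) (((0:ℤ):ℂ) * c) = 0 := by norm_num
  have key : ⁅ρ 2, ρ (-2)⁆ - (4 : ℂ) • ρ 0 = 0 := by
    rw [hρ 2, hρ (-2), hρ 0]
    apply LinearMap.ext
    intro u
    simp only [LieRing.of_associative_ring_bracket, Ring.lie_def, LinearMap.sub_apply, LinearMap.smul_apply, Module.End.mul_apply,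
      LinearMap.add_apply, LinearMap.zero_apply, mz_apply, smul_eq_Cmul]
    simp only [p3, p1, p0, q2, qm2, q0, c2, cm2, c0, map_zero, add_zero, map_ofNat]
    simp only [div_eq_mul_inv, map_add, map_neg, neg_mul, Dz_mul, dhi, dei, d2, Dz_C,
      zero_mul, mul_zero, add_zero, zero_add, neg_neg, mul_neg]
    linear_combination (((4)*(Dz h)*((Dz h)⁻¹)*(b)*(u) + (-4)*(h)*(Dz h)*((Dz h)⁻¹)^2*(Dz u) + (-4)*(h)*(h⁻¹)*(Dz h)*((Dz h)⁻¹)*(algebraMap ℂ (LaurentSeries ℂ) c)*(u) + (2)*(h)*(h⁻¹)*(Dz h)*((Dz h)⁻¹)*(b)*(u) + (-1)*(h)^2*(h⁻¹)*((Dz h)⁻¹)*(Dz b)*(u) + (-1)*(h)^2*(h⁻¹)*(Dz h)*((Dz h)⁻¹)^2*(Dz u) + (-4)*(h)^2*(h⁻¹)^2*(Dz h)*((Dz h)⁻¹)*(algebraMap ℂ (LaurentSeries ℂ) c)*(u) + (2)*(h)^2*(h⁻¹)^2*(Dz h)*((Dz h)⁻¹)*(b)*(u))) * (mul_inv_cancel₀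 hh) + (((4)*(b)*(u) + (-4)*(h)*((Dz h)⁻¹)*(Dz u))) * (mul_inv_cancel₀ hder)
  refine ⟨key, ?_⟩
  intro k hk
  have hx : ((1 / 2 : ℂ) * k) • (1 : Module.End ℂ (LaurentSeries ℂ)) = 0 := by
    have habel : (4:ℂ) • ρ 0 + ((1 / 2 : ℂ) * k) • (1 : Module.End ℂ (LaurentSeries ℂ))
        - (4:ℂ) • ρ 0 = ((1 / 2 : ℂ) * k) • (1 : Module.End ℂ (LaurentSeries ℂ)) := by abel
    rw [hk, habel] at key
    exact key
  have hx1 := congrArg (fun T : Module.End ℂ (LaurentSeries ℂ) => T 1) hx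
  simp only [LinearMap.smul_apply, Module.End.one_apply, LinearMap.zero_apply] at hx1
  rcases smul_eq_zero.mp hx1 with h1 | h1
  · field_simp at h1
    simpa using h1
  · exact absurd h1 one_ne_zero
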